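/- Fix α > 0. Let N be a locally finite point process on ℝ̄₀ with P(N(ℝ̄₀)>0) > 0 which is strictly α-stable. Then for every f ∈ C_c^+(ℝ̄₀), either Ψ_N(f‖y) = 1 for all y > 0, or there exists a constant c_f > 0 such that Ψ_N(f‖y) = Φ_α(y·c_f) for all y > 0; in particular, if Ψ_N(f‖y₀) < 1 for some y₀ > 0 for every f ∈ C_c^+(ℝ̄₀), then the scaled Laplace functional of N is scale-uniquely supported on [Φ_α]_sc. -/

import Mathlib

open MeasureTheory Filter Set
open scoped ENNReal Topology

/-- `expNeg z = exp(-z)` for `z ∈ [0,∞]`, with `expNeg ∞ = 0`. -/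
noncomputable def expNeg (z : ℝ≥0∞) : ℝ := if z = ∞ then 0 else Real.exp (-z.toReal)

/-- `f ∈ C_c^+(ℝ̄₀)`: a nonnegative function, continuous on `ℝ̄₀ = [-∞,∞] \ {0}`
(i.e. continuous on `ℝ` with finite limits at `±∞`), vanishing in a neighbourhood of `0`
(compact support in `ℝ̄₀` not containing `0`). -/
def IsCcPos (f : ℝ → ℝ) : Prop :=
  Continuous f ∧ (∀ x, 0 ≤ f x) ∧ (∃ ε > 0, ∀ x : ℝ, |x| < ε → f x = 0) ∧
  (∃ L : ℝ, Tendsto f atTop (𝓝 L)) ∧ (∃ L : ℝ, Tendsto f atBot (𝓝 L))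

/-- A locally finite point process on `ℝ̄₀`: a measurable family of purely atomic
`ℕ ∪ {∞}`-valued measures on `ℝ \ {0}`, a.s. finite on sets bounded away from `0`. -/
def IsPointProcess {Ω : Type*} [MeasurableSpace Ω] (μ : Measure Ω) (N : Ω → Measure ℝ) : Prop :=
  Measurable N ∧
  (∀ᵐ ω ∂μ, (N ω) {0} = 0) ∧
  (∀ᵐ ω ∂μ, ∀ b : ℝ, 0 < b → (N ω) {x : ℝ | b ≤ |x|} < ∞) ∧
  (∀ᵐ ω ∂μ, ∀ B : Set ℝ, MeasurableSet B → (N ω) B ∈ Set.range ((↑) : ℕ → ℝ≥0∞) ∪ {∞})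

/-- The scaled Laplace functional `Ψ_N(f‖y) = E[exp(-∫ f(x/y) N(dx))]`. -/
noncomputable def SLF {Ω : Type*} [MeasurableSpace Ω] (μ : Measure Ω) (N : Ω → Measure ℝ)
    (f : ℝ → ℝ) (y : ℝ) : ℝ :=
  ∫ ω, expNeg (∫⁻ x, ENNReal.ofReal (f (x / y)) ∂(N ω)) ∂μ

/-- The scaled Laplace functional of `N` is scale-uniquely supported on `[g]_sc`:
for every `f ∈ C_c^+(ℝ̄₀)` there is `c_f > 0` with `Ψ_N(f‖y) = g(c_f · y)` for all `y > 0`. -/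
def ScaleUniqSupp {Ω : Type*} [MeasurableSpace Ω] (μ : Measure Ω) (N : Ω → Measure ℝ)
    (g : ℝ → ℝ) : Prop :=
  ∀ f : ℝ → ℝ, IsCcPos f → ∃ c > 0, ∀ y > 0, SLF μ N f y = g (c * y)

/-- `𝕊_b m`: pushforward of the measure `m` under `x ↦ b·x`. -/
noncomputable def scaleMeasure (b : ℝ) (m : Measure ℝ) : Measure ℝ :=
  Measure.map (fun x => b * x) m

/-- `N` is strictly `α`-stable: for all `b₁, b₂ > 0`, if `N₁, N₂` are independent copies
of `N` then `𝕊_{b₁}N₁ + 𝕊_{b₂}N₂` has the same distribution as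
`𝕊_{(b₁^α+b₂^α)^{1/α}}N`. -/
def IsStAlphaS {Ω : Type*} [MeasurableSpace Ω] (μ : Measure Ω) (N : Ω → Measure ℝ)
    (α : ℝ) : Prop :=
  ∀ b₁ > (0:ℝ), ∀ b₂ > (0:ℝ),
    Measure.map (fun p : Ω × Ω => scaleMeasure b₁ (N p.1) + scaleMeasure b₂ (N p.2))
        (μ.prod μ)
      = Measure.map (fun ω => scaleMeasure ((b₁ ^ α + b₂ ^ α) ^ (1/α)) (N ω)) μ

/-- The Fréchet distribution function `Φ_α(x) = exp(-x^(-α))`. -/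
noncomputable def frechet (α x : ℝ) : ℝ := Real.exp (-(x ^ (-α)))

/-! ### Auxiliary lemmas -/

lemma expNeg_nonneg (z : ℝ≥0∞) : 0 ≤ expNeg z := by
  unfold expNeg; split
  · exact le_rfl
  · exact (Real.exp_pos _).le

lemma expNeg_le_one (z : ℝ≥0∞) : expNeg z ≤ 1 := by
  unfold expNeg; split
  · exact zero_le_one
  · exact Real.exp_le_one_iff.mpr (neg_nonpos.mpr ENNReal.toReal_nonneg)

lemma expNeg_pos {z : ℝ≥0∞} (hz : z ≠ ∞) : 0 < expNeg z := by
  unfold expNeg; rw [if_neg hz]; exact Real.exp_pos _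

lemma expNeg_add (a b : ℝ≥0∞) : expNeg (a + b) = expNeg a * expNeg b := by
  unfold expNeg
  rcases eq_or_ne a ∞ with ha | ha
  · simp [ha]
  rcases eq_or_ne b ∞ with hb | hb
  · simp [hb]
  rw [if_neg (by simp [ENNReal.add_eq_top, ha, hb]), if_neg ha, if_neg hb,
    ENNReal.toReal_add ha hb, neg_add, Real.exp_add]

lemma measurable_expNeg : Measurable expNeg := by
  unfold expNeg
  exact Measurable.ite (MeasurableSet.singleton ∞)
    measurable_const (ENNReal.measurable_toReal.neg.exp)

/-- Nonnegative additive functions on `(0,∞)` are linear. -/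
lemma cauchy_solve (L : ℝ → ℝ) (hadd : ∀ s > (0:ℝ), ∀ t > (0:ℝ), L (s + t) = L s + L t)
    (hnn : ∀ s > (0:ℝ), 0 ≤ L s) : ∀ s > (0:ℝ), L s = L 1 * s := by
  have hsmul : ∀ n : ℕ, ∀ s : ℝ, 0 < s → L (((n : ℝ) + 1) * s) = ((n : ℝ) + 1) * L s := by
    intro n
    induction n with
    | zero => intro s hs; norm_num
    | succ n ih =>
      intro s hs
      push_cast
      have h1 : ((n : ℝ) + 1 + 1) * s = ((n : ℝ) + 1) * s + s := by ring
      rw [h1, hadd _ (by positivity) _ hs, ih s hs]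
      ring
  have key : ∀ n m : ℕ, 0 < n → 0 < m → L ((n : ℝ) / (m : ℝ)) = ((n : ℝ) / (m : ℝ)) * L 1 := by
    intro n m hn hm
    obtain ⟨n', rfl⟩ := Nat.exists_eq_succ_of_ne_zero hn.ne'
    obtain ⟨m', rfl⟩ := Nat.exists_eq_succ_of_ne_zero hm.ne'
    have hmr : ((m' + 1 : ℕ) : ℝ) = (m' : ℝ) + 1 := by push_cast; ring
    have hnr : ((n' + 1 : ℕ) : ℝ) = (n' : ℝ) + 1 := by push_cast; ring
    have hs : (0:ℝ) < ((n' + 1 : ℕ) : ℝ) / ((m' + 1 : ℕ) : ℝ) := by positivity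
    have h1 := hsmul m' (((n' + 1 : ℕ) : ℝ) / ((m' + 1 : ℕ) : ℝ)) hs
    have h2 : ((m' : ℝ) + 1) * (((n' + 1 : ℕ) : ℝ) / ((m' + 1 : ℕ) : ℝ)) = ((n' + 1 : ℕ) : ℝ) := by
      rw [hmr]; field_simp
    rw [h2] at h1
    have h3 : L ((n' + 1 : ℕ) : ℝ) = ((n' + 1 : ℕ) : ℝ) * L 1 := by
      have := hsmul n' 1 one_pos
      rw [mul_one] at this
      rw [hnr, this]
    rw [h3] at h1
    have hm1 : ((m' : ℝ) + 1) ≠ 0 := by positivity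
    field_simp [hmr] at h1 ⊢
    push_cast at h1 ⊢; linarith [h1]
  have hrat : ∀ q : ℚ, 0 < q → L (q : ℝ) = L 1 * (q : ℝ) := by
    intro q hq
    have hnum : 0 < q.num := Rat.num_pos.mpr hq
    have hq0 : 0 < q.num.toNat := by omega
    have hqr : (q : ℝ) = ((q.num.toNat : ℝ)) / ((q.den : ℝ)) := by
      rw [Rat.cast_def]
      congr 1
      exact_mod_cast (Int.toNat_of_nonneg hnum.le).symm
    rw [hqr, key q.num.toNat q.den hq0 q.pos, mul_comm]
  have hmono : ∀ s t : ℝ, 0 < s → s ≤ t → L s ≤ L t := by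
    intro s t hs hst
    rcases eq_or_lt_of_le hst with rfl | hlt
    · exact le_rfl
    · have h1 : t = s + (t - s) := by ring
      rw [h1, hadd s hs (t - s) (by linarith)]
      linarith [hnn (t - s) (by linarith)]
  intro s hs
  have hc0 : 0 ≤ L 1 := hnn 1 one_pos
  rcases eq_or_lt_of_le hc0 with hc | hc
  · -- L 1 = 0 : pick rational above s
    obtain ⟨q, hq1, hq2⟩ := exists_rat_btwn (lt_add_one s)
    have hq0 : (0:ℚ) < q := by
      have : (0:ℝ) < (q:ℝ) := lt_trans hs hq1
      exact_mod_cast this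
    have h1 : L s ≤ L (q : ℝ) := hmono s (q : ℝ) hs hq1.le
    rw [hrat q hq0, ← hc] at h1
    have h2 := hnn s hs
    rw [← hc]
    nlinarith
  · refine le_antisymm ?_ ?_
    · by_contra hlt
      push_neg at hlt
      set g := L s - L 1 * s with hg
      have hgpos : 0 < g := by simp [hg]; linarith
      obtain ⟨q, hq1, hq2⟩ := exists_rat_btwn (show s < s + g / L 1 by
        have := div_pos hgpos hc; linarith)
      have hq0 : (0:ℚ) < q := by
        have : (0:ℝ) < (q:ℝ) := lt_trans hs hq1
        exact_mod_cast this
      have h1 : L s ≤ L (q : ℝ) := hmono s (q : ℝ) hs hq1.le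
      rw [hrat q hq0] at h1
      have h2 : L 1 * (q : ℝ) < L 1 * (s + g / L 1) := by
        exact mul_lt_mul_of_pos_left hq2 hc
      have h3 : L 1 * (s + g / L 1) = L 1 * s + g := by field_simp
      rw [h3] at h2
      have : L s < L s := by simp only [hg] at h2; linarith
      exact lt_irrefl _ this
    · by_contra hlt
      push_neg at hlt
      set g := L 1 * s - L s with hg
      have hgpos : 0 < g := by simp [hg]; linarith
      have hlow : max (s - g / L 1) (s / 2) < s := by
        apply max_lt
        · have : 0 < g / L 1 := by positivity
          linarith
        · linarith
      obtain ⟨q, hq1, hq2⟩ := exists_rat_btwn hlow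
      have hq0r : (0:ℝ) < (q:ℝ) := lt_of_lt_of_le (by linarith) (le_trans (le_max_right _ _) hq1.le)
      have hq0 : (0:ℚ) < q := by exact_mod_cast hq0r
      have h1 : L (q : ℝ) ≤ L s := hmono (q : ℝ) s hq0r hq2.le
      rw [hrat q hq0] at h1
      have h4 : s - g / L 1 < (q : ℝ) := lt_of_le_of_lt (le_max_left _ _) hq1
      have h2 : L 1 * (s - g / L 1) < L 1 * (q : ℝ) := mul_lt_mul_of_pos_left h4 hc
      have h3 : L 1 * (s - g / L 1) = L 1 * s - g := by field_simp
      rw [h3] at h2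
      have : L s < L s := by simp only [hg] at h2; linarith
      exact lt_irrefl _ this

/-- `φ_f(b) = E[exp(-∫ f(b·x) N(dx))]`. -/
noncomputable def phiLF {Ω : Type*} [MeasurableSpace Ω] (μ : Measure Ω) (N : Ω → Measure ℝ)
    (f : ℝ → ℝ) (b : ℝ) : ℝ :=
  ∫ ω, expNeg (∫⁻ x, ENNReal.ofReal (f (b * x)) ∂(N ω)) ∂μ

lemma phiLF_stab {Ω : Type*} [MeasurableSpace Ω] (μ : Measure Ω) [IsProbabilityMeasure μ]
    (N : Ω → Measure ℝ) (hNm : Measurable N) {f : ℝ → ℝ} (hfc : Continuous f)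
    {α : ℝ} (hstas : IsStAlphaS μ N α) {b₁ b₂ : ℝ} (hb₁ : 0 < b₁) (hb₂ : 0 < b₂) :
    phiLF μ N f b₁ * phiLF μ N f b₂ = phiLF μ N f ((b₁ ^ α + b₂ ^ α) ^ (1/α)) := by
  set b := (b₁ ^ α + b₂ ^ α) ^ (1/α) with hb
  have hg : Measurable fun x : ℝ => ENNReal.ofReal (f x) :=
    ENNReal.measurable_ofReal.comp hfc.measurable
  have hF : Measurable fun m : Measure ℝ => expNeg (∫⁻ x, ENNReal.ofReal (f x) ∂m) :=
    measurable_expNeg.comp (Measure.measurable_lintegral hg)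
  have hT : Measurable fun p : Ω × Ω =>
      scaleMeasure b₁ (N p.1) + scaleMeasure b₂ (N p.2) := by
    apply Measurable.add
    · exact (Measure.measurable_map _ (continuous_mul_left b₁).measurable).comp
        (hNm.comp measurable_fst)
    · exact (Measure.measurable_map _ (continuous_mul_left b₂).measurable).comp
        (hNm.comp measurable_snd)
  have hS : Measurable fun ω => scaleMeasure b (N ω) :=
    (Measure.measurable_map _ (continuous_mul_left b).measurable).comp hNm
  have key : ∫ p : Ω × Ω, expNeg (∫⁻ x, ENNReal.ofReal (f x)
        ∂(scaleMeasure b₁ (N p.1) + scaleMeasure b₂ (N p.2))) ∂(μ.prod μ)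
      = ∫ ω, expNeg (∫⁻ x, ENNReal.ofReal (f x) ∂(scaleMeasure b (N ω))) ∂μ := by
    have h1 := hstas b₁ hb₁ b₂ hb₂
    calc ∫ p : Ω × Ω, expNeg (∫⁻ x, ENNReal.ofReal (f x)
          ∂(scaleMeasure b₁ (N p.1) + scaleMeasure b₂ (N p.2))) ∂(μ.prod μ)
        = ∫ m, expNeg (∫⁻ x, ENNReal.ofReal (f x) ∂m)
            ∂(Measure.map (fun p : Ω × Ω => scaleMeasure b₁ (N p.1) + scaleMeasure b₂ (N p.2))
              (μ.prod μ)) := by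
          rw [integral_map hT.aemeasurable hF.stronglyMeasurable.aestronglyMeasurable]
      _ = ∫ m, expNeg (∫⁻ x, ENNReal.ofReal (f x) ∂m)
            ∂(Measure.map (fun ω => scaleMeasure b (N ω)) μ) := by rw [h1]
      _ = ∫ ω, expNeg (∫⁻ x, ENNReal.ofReal (f x) ∂(scaleMeasure b (N ω))) ∂μ := by
          rw [integral_map hS.aemeasurable hF.stronglyMeasurable.aestronglyMeasurable]
  have hlin : ∀ (c : ℝ) (m : Measure ℝ),
      ∫⁻ x, ENNReal.ofReal (f x) ∂(scaleMeasure c m)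
        = ∫⁻ x, ENNReal.ofReal (f (c * x)) ∂m := by
    intro c m
    rw [scaleMeasure, lintegral_map hg (continuous_mul_left c).measurable]
  calc phiLF μ N f b₁ * phiLF μ N f b₂
      = ∫ p : Ω × Ω, (expNeg (∫⁻ x, ENNReal.ofReal (f (b₁ * x)) ∂(N p.1)))
          * (expNeg (∫⁻ x, ENNReal.ofReal (f (b₂ * x)) ∂(N p.2))) ∂(μ.prod μ) :=
        (integral_prod_mul _ _).symm
    _ = ∫ p : Ω × Ω, expNeg (∫⁻ x, ENNReal.ofReal (f x)
          ∂(scaleMeasure b₁ (N p.1) + scaleMeasure b₂ (N p.2))) ∂(μ.prod μ) := by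
        refine integral_congr_ae (ae_of_all _ fun p => ?_)
        dsimp only
        rw [lintegral_add_measure, hlin, hlin, expNeg_add]
    _ = ∫ ω, expNeg (∫⁻ x, ENNReal.ofReal (f x) ∂(scaleMeasure b (N ω))) ∂μ := key
    _ = phiLF μ N f b := by
        refine integral_congr_ae (ae_of_all _ fun ω => ?_)
        dsimp only
        rw [hlin]

/-- if `N` is a strictly `α`-stable locally finite point process on `ℝ̄₀` with
`P(N(ℝ̄₀)>0) > 0`, then for every `f ∈ C_c^+(ℝ̄₀)` either `Ψ_N(f‖·) ≡ 1` on `(0,∞)` or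
`Ψ_N(f‖y) = Φ_α(y·c_f)` for some `c_f > 0`; in particular if the degenerate case never
occurs then the scaled Laplace functional of `N` is scale-uniquely supported on `[Φ_α]_sc`. -/
theorem stmt1 {Ω : Type*} [MeasurableSpace Ω] (μ : Measure Ω) [IsProbabilityMeasure μ]
    (N : Ω → Measure ℝ) (hN : IsPointProcess μ N)
    (hpos : 0 < μ {ω | 0 < N ω Set.univ})
    (α : ℝ) (hα : 0 < α) (hstas : IsStAlphaS μ N α) :
    (∀ f : ℝ → ℝ, IsCcPos f →
      (∀ y > 0, SLF μ N f y = 1) ∨ (∃ c > 0, ∀ y > 0, SLF μ N f y = frechet α (y * c))) ∧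
    ((∀ f : ℝ → ℝ, IsCcPos f → ∃ y₀ > 0, SLF μ N f y₀ < 1) →
      ScaleUniqSupp μ N (frechet α)) := by
  obtain ⟨hNm, -, hNfin, -⟩ := hN
  have main : ∀ f : ℝ → ℝ, IsCcPos f →
      (∀ y > 0, SLF μ N f y = 1) ∨ (∃ c > 0, ∀ y > 0, SLF μ N f y = frechet α (y * c)) := by
    intro f hf
    obtain ⟨hfc, hf0, ⟨ε, hε, hfε⟩, ⟨L₁, hL₁⟩, ⟨L₂, hL₂⟩⟩ := hf
    -- f is bounded above
    obtain ⟨M, hM0, hM⟩ : ∃ M : ℝ, 0 ≤ M ∧ ∀ x, f x ≤ M := by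
      obtain ⟨A, hA⟩ := (Filter.eventually_atTop).mp
        (hL₁.eventually (eventually_le_nhds (lt_add_one L₁)))
      obtain ⟨B, hB⟩ := (Filter.eventually_atBot).mp
        (hL₂.eventually (eventually_le_nhds (lt_add_one L₂)))
      set A' := max A 0 with hA'
      set B' := min B 0 with hB'
      have hne : (Set.Icc B' A').Nonempty := ⟨0, by simp [hA', hB']⟩
      obtain ⟨x₀, -, hx₀⟩ := (isCompact_Icc (a := B') (b := A')).exists_isMaxOn hne
        hfc.continuousOn
      refine ⟨max (max (L₁ + 1) (L₂ + 1)) (f x₀), le_trans (hf0 x₀) (le_max_right _ _), ?_⟩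
      have hM1 : L₁ + 1 ≤ max (max (L₁ + 1) (L₂ + 1)) (f x₀) :=
        le_trans (le_max_left _ _) (le_max_left _ _)
      have hM2 : L₂ + 1 ≤ max (max (L₁ + 1) (L₂ + 1)) (f x₀) :=
        le_trans (le_max_right _ _) (le_max_left _ _)
      intro x
      rcases le_total x A' with h1 | h1
      · rcases le_total B' x with h2 | h2
        · exact le_trans (hx₀ ⟨h2, h1⟩) (le_max_right _ _)
        · exact le_trans (hB x (le_trans h2 (min_le_left _ _))) hM2
      · exact le_trans (hA x (le_trans (le_max_left _ _) h1)) hM1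
    -- measurability of the integrand of phiLF
    have hgm : ∀ c : ℝ, Measurable fun x : ℝ => ENNReal.ofReal (f (c * x)) := fun c =>
      ENNReal.measurable_ofReal.comp (hfc.comp (continuous_mul_left c)).measurable
    have hFm : ∀ c : ℝ, Measurable fun ω =>
        expNeg (∫⁻ x, ENNReal.ofReal (f (c * x)) ∂(N ω)) := fun c =>
      measurable_expNeg.comp ((Measure.measurable_lintegral (hgm c)).comp hNm)
    have hFint : ∀ c : ℝ, Integrable
        (fun ω => expNeg (∫⁻ x, ENNReal.ofReal (f (c * x)) ∂(N ω))) μ := by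
      intro c
      refine Integrable.mono' (integrable_const 1) (hFm c).aestronglyMeasurable
        (ae_of_all _ fun ω => ?_)
      rw [Real.norm_eq_abs, abs_of_nonneg (expNeg_nonneg _)]
      exact expNeg_le_one _
    -- positivity
    have hphi_pos : ∀ c : ℝ, 0 < c → 0 < phiLF μ N f c := by
      intro c hc
      have hae : ∀ᵐ ω ∂μ, 0 < expNeg (∫⁻ x, ENNReal.ofReal (f (c * x)) ∂(N ω)) := by
        filter_upwards [hNfin] with ω hω
        refine expNeg_pos (ne_of_lt ?_)
        have hset : MeasurableSet {x : ℝ | ε / c ≤ |x|} :=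
          (isClosed_le continuous_const continuous_abs).measurableSet
        have hle : ∀ x : ℝ, ENNReal.ofReal (f (c * x))
            ≤ Set.indicator {x : ℝ | ε / c ≤ |x|} (fun _ => ENNReal.ofReal M) x := by
          intro x
          by_cases hx : x ∈ {x : ℝ | ε / c ≤ |x|}
          · rw [Set.indicator_of_mem hx]
            exact ENNReal.ofReal_le_ofReal (hM _)
          · rw [Set.indicator_of_notMem hx]
            simp only [Set.mem_setOf_eq, not_le] at hx
            have : |c * x| < ε := by
              rw [abs_mul, abs_of_pos hc]
              calc c * |x| < c * (ε / c) := by exact mul_lt_mul_of_pos_left hx hc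
                _ = ε := by field_simp
            rw [hfε _ this]
            simp
        calc ∫⁻ x, ENNReal.ofReal (f (c * x)) ∂(N ω)
            ≤ ∫⁻ x, Set.indicator {x : ℝ | ε / c ≤ |x|} (fun _ => ENNReal.ofReal M) x ∂(N ω) :=
              lintegral_mono hle
          _ = ENNReal.ofReal M * (N ω) {x : ℝ | ε / c ≤ |x|} := by
              rw [lintegral_indicator hset, setLIntegral_const]
          _ < ∞ := ENNReal.mul_lt_top ENNReal.ofReal_lt_top (hω (ε / c) (by positivity))
      rw [phiLF]
      rw [integral_pos_iff_support_of_nonneg_ae (ae_of_all _ fun ω => expNeg_nonneg _) (hFint c)]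
      have hsubset : ∀ᵐ ω ∂μ, ω ∈ Function.support
          fun ω => expNeg (∫⁻ x, ENNReal.ofReal (f (c * x)) ∂(N ω)) := by
        filter_upwards [hae] with ω hω
        exact ne_of_gt hω
      rw [Filter.eventually_iff, mem_ae_iff] at hsubset
      have h1 : μ Set.univ ≤ μ (Function.support
          fun ω => expNeg (∫⁻ x, ENNReal.ofReal (f (c * x)) ∂(N ω))) + 0 := by
        rw [← hsubset, ← Set.union_compl_self (Function.support
          fun ω => expNeg (∫⁻ x, ENNReal.ofReal (f (c * x)) ∂(N ω)))]
        exact measure_union_le _ _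
      rw [add_zero, measure_univ] at h1
      exact lt_of_lt_of_le zero_lt_one h1
    have hphi_le : ∀ c : ℝ, phiLF μ N f c ≤ 1 := by
      intro c
      calc phiLF μ N f c ≤ ∫ _, (1:ℝ) ∂μ :=
            integral_mono (hFint c) (integrable_const 1) (fun ω => expNeg_le_one _)
        _ = 1 := by simp
    -- the Cauchy functional equation
    set L : ℝ → ℝ := fun s => -Real.log (phiLF μ N f (s ^ (1/α))) with hLdef
    have hrp : ∀ s : ℝ, 0 < s → 0 < s ^ (1/α) := fun s hs => Real.rpow_pos_of_pos hs _
    have hpow : ∀ s : ℝ, 0 < s → (s ^ (1/α)) ^ α = s := by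
      intro s hs
      rw [← Real.rpow_mul hs.le, one_div, inv_mul_cancel₀ hα.ne', Real.rpow_one]
    have hadd : ∀ s > (0:ℝ), ∀ t > (0:ℝ), L (s + t) = L s + L t := by
      intro s hs t ht
      have h1 := phiLF_stab μ N hNm hfc hstas (hrp s hs) (hrp t ht)
      rw [hpow s hs, hpow t ht] at h1
      simp only [hLdef]
      rw [← h1, Real.log_mul (hphi_pos _ (hrp s hs)).ne' (hphi_pos _ (hrp t ht)).ne']
      ring
    have hnn : ∀ s > (0:ℝ), 0 ≤ L s := by
      intro s hs
      simp only [hLdef]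
      exact neg_nonneg.mpr (Real.log_nonpos (hphi_pos _ (hrp s hs)).le (hphi_le _))
    have hlinL := cauchy_solve L hadd hnn
    set c := L 1 with hcdef
    have hc0 : 0 ≤ c := hnn 1 one_pos
    have hphi_val : ∀ s : ℝ, 0 < s → phiLF μ N f (s ^ (1/α)) = Real.exp (-(c * s)) := by
      intro s hs
      have h1 : L s = c * s := hlinL s hs
      have h2 : Real.log (phiLF μ N f (s ^ (1/α))) = -(c * s) := by
        simp only [hLdef] at h1
        linarith
      rw [← Real.exp_log (hphi_pos _ (hrp s hs)), h2]
    have hSLFv : ∀ y : ℝ, 0 < y → SLF μ N f y = Real.exp (-(c * y ^ (-α))) := by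
      intro y hy
      have h3 : ((y : ℝ) ^ (-α)) ^ (1/α) = y⁻¹ := by
        rw [← Real.rpow_mul hy.le]
        rw [show -α * (1/α) = -1 by field_simp]
        exact Real.rpow_neg_one y
      have h4 : SLF μ N f y = phiLF μ N f y⁻¹ := by
        simp only [SLF, phiLF, div_eq_inv_mul]
      rw [h4, ← h3, hphi_val _ (Real.rpow_pos_of_pos hy _)]
    rcases eq_or_lt_of_le hc0 with hc | hc
    · left
      intro y hy
      rw [hSLFv y hy, ← hc]
      simp
    · right
      refine ⟨c ^ (-(1/α)), Real.rpow_pos_of_pos hc _, fun y hy => ?_⟩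
      rw [hSLFv y hy, frechet]
      have hcf : (0:ℝ) < c ^ (-(1/α)) := Real.rpow_pos_of_pos hc _
      have h5 : (y * c ^ (-(1/α))) ^ (-α) = y ^ (-α) * c := by
        rw [Real.mul_rpow hy.le hcf.le, ← Real.rpow_mul hc.le,
          show -(1/α) * -α = 1 by field_simp, Real.rpow_one]
      rw [h5, mul_comm (y ^ (-α)) c]
  refine ⟨main, fun h f hf => ?_⟩
  rcases main f hf with h1 | ⟨cc, hcc, h2⟩
  · obtain ⟨y₀, hy₀, hlt⟩ := h f hf
    exact absurd (h1 y₀ hy₀) (ne_of_lt hlt)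
  · exact ⟨cc, hcc, fun y hy => by rw [h2 y hy, mul_comm cc y]⟩
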